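/- arXiv:2012.02192 — 3 statements merged into one kernel-verified Lean document; each statement's English description precedes it below -/
import Mathlib

section
/- In the category of graphs, every pushout square along a monomorphism is also a pullback square. -/
open CategoryTheory CategoryTheory.Limits

/-- A directed graph: sets of nodes and edges with source and target functions. -/
structure DirGraph : Type 1 where
  N : Type
  E : Type
  s : E → N
  t : E → N

/-- A graph morphism: node and edge maps commuting with source and target. -/
@[ext]
structure GraphHom (G G' : DirGraph) : Type where
  fN : G.N → G'.N
  fE : G.E → G'.E
  comm_s : ∀ e, fN (G.s e) = G'.s (fE e)
  comm_t : ∀ e, fN (G.t e) = G'.t (fE e)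

instance : Category DirGraph where
  Hom := GraphHom
  id G := ⟨id, id, fun _ => rfl, fun _ => rfl⟩
  comp f g := ⟨g.fN ∘ f.fN, g.fE ∘ f.fE,
    fun e => by simp only [Function.comp_apply, f.comm_s, g.comm_s],
    fun e => by simp only [Function.comp_apply, f.comm_t, g.comm_t]⟩
  id_comp _ := rfl
  comp_id _ := rfl
  assoc _ _ _ := rfl

namespace GraphAux

open WalkingParallelPair WalkingParallelPairHom

/-- Graphs as diagrams of shape `WalkingParallelPair` in `Type`. -/
def toFunctor : DirGraph ⥤ (WalkingParallelPair ⥤ Type) where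
  obj G := parallelPair (X := G.E) (Y := G.N) (TypeCat.ofHom G.s) (TypeCat.ofHom G.t)
  map {G G'} φ := parallelPairHom (X := G.E) (Y := G.N) (X' := G'.E) (Y' := G'.N)
    (TypeCat.ofHom G.s) (TypeCat.ofHom G.t) (TypeCat.ofHom G'.s) (TypeCat.ofHom G'.t) (TypeCat.ofHom φ.fE) (TypeCat.ofHom φ.fN) (by ext e; exact φ.comm_s e) (by ext e; exact φ.comm_t e)
  map_id G := by
    ext x
    cases x <;> rfl
  map_comp φ ψ := by
    ext x
    cases x <;> rfl

/-- Diagrams of shape `WalkingParallelPair` in `Type` as graphs. -/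
def ofFunctor : (WalkingParallelPair ⥤ Type) ⥤ DirGraph where
  obj K := ⟨K.obj one, K.obj zero, K.map left, K.map right⟩
  map {K K'} η := ⟨η.app one, η.app zero,
    fun e => FunctorToTypes.naturality η left e,
    fun e => FunctorToTypes.naturality η right e⟩
  map_id K := rfl
  map_comp η θ := rfl

/-- The equivalence between graphs and parallel-pair diagrams in `Type`. -/
noncomputable def equiv : DirGraph ≌ (WalkingParallelPair ⥤ Type) :=
  CategoryTheory.Equivalence.mk toFunctor ofFunctor
    (NatIso.ofComponents (fun G => Iso.refl G) (by intros; rfl))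
    (NatIso.ofComponents (fun K => (diagramIsoParallelPair K).symm) (by
      intro K K' η
      ext x a
      cases x <;> simp [toFunctor, ofFunctor, diagramIsoParallelPair]))

instance : HasPullbacks DirGraph :=
  Adjunction.hasLimitsOfShape_of_equivalence equiv.functor

instance : HasPushouts DirGraph :=
  Adjunction.hasColimitsOfShape_of_equivalence equiv.functor

noncomputable instance : Adhesive DirGraph :=
  adhesive_of_preserves_and_reflects_isomorphism equiv.functor

end GraphAux

/-- In the category of graphs, every pushout square along a monomorphism is also a pullback. -/
theorem graph_pushout_isPullback {A B C D : DirGraph}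
    (f : A ⟶ B) (g : A ⟶ C) (h : B ⟶ D) (k : C ⟶ D)
    (sq : IsPushout f g h k) (hf : Mono f) : IsPullback f g h k := by
  haveI := hf
  exact CategoryTheory.Adhesive.isPullback_of_isPushout_of_mono_left sq
end

section
/- The invariant closure is a section of retyping: for every graph G typed over TG, retyping the invariant closure inv(G) (typed over the enriched type graph TG') back along the inclusion in_TG : TG → TG' by pullback yields a graph isomorphic to G, i.e., in_TG^<(inv(G)) ≅ G. -/
open CategoryTheory CategoryTheory.Limits

/-- The diagram whose colimit is the invariant closure of `G`: the graph `G` together with,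
for each applicable shape, the body complement glued along the occurrence of its border. -/
def invIndex (ι : Type) (G : DirGraph) (border cbody : ι → DirGraph)
    (cshape : ∀ i, border i ⟶ cbody i) (occ : ∀ i, border i ⟶ G) :
    MultispanIndex
      { L := ι, R := Option ι, fst := fun i => some i, snd := fun _ => none } DirGraph where
  left := border
  right := fun r => Option.rec G cbody r
  fst := cshape
  snd := occ

namespace InvClosureAux

/-- The walking node. -/
def Pt : DirGraph := ⟨Unit, Empty, fun e => e.elim, fun e => e.elim⟩

/-- The walking edge. -/
def Ar : DirGraph := ⟨Bool, Unit, fun _ => false, fun _ => true⟩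

/-- Pick a node. -/
def ptHom (G : DirGraph) (n : G.N) : Pt ⟶ G :=
  ⟨fun _ => n, fun e => e.elim, fun e => e.elim, fun e => e.elim⟩

/-- Pick an edge. -/
def arHom (G : DirGraph) (e : G.E) : Ar ⟶ G :=
  ⟨fun b => Bool.rec (G.s e) (G.t e) b, fun _ => e, fun _ => rfl, fun _ => rfl⟩

lemma mono_fN {A B : DirGraph} (f : A ⟶ B) (h : Mono f) : Function.Injective f.fN := by
  intro n₁ n₂ hn
  have : ptHom A n₁ ≫ f = ptHom A n₂ ≫ f := by
    apply GraphHom.ext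
    · funext x; exact hn
    · funext e; exact e.elim
  have := (cancel_mono f).mp this
  exact congrFun (congrArg GraphHom.fN this) ()

lemma mono_fE {A B : DirGraph} (f : A ⟶ B) (h : Mono f) : Function.Injective f.fE := by
  intro e₁ e₂ he
  have : arHom A e₁ ≫ f = arHom A e₂ ≫ f := by
    apply GraphHom.ext
    · funext b
      cases b
      · show f.fN (A.s e₁) = f.fN (A.s e₂)
        rw [f.comm_s, f.comm_s, he]
      · show f.fN (A.t e₁) = f.fN (A.t e₂)
        rw [f.comm_t, f.comm_t, he]
    · funext x; exact he
  have := (cancel_mono f).mp this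
  exact congrFun (congrArg GraphHom.fE this) ()

lemma pb_node {A B X Y : DirGraph} {f : A ⟶ B} {g : A ⟶ X} {h : B ⟶ Y} {k : X ⟶ Y}
    (H : IsPullback f g h k) (b : B.N) (x : X.N) (hbx : h.fN b = k.fN x) :
    ∃ a : A.N, f.fN a = b ∧ g.fN a = x := by
  have w : ptHom B b ≫ h = ptHom X x ≫ k := by
    apply GraphHom.ext
    · funext _; exact hbx
    · funext e; exact e.elim
  refine ⟨(H.lift _ _ w).fN (), ?_, ?_⟩
  · exact congrFun (congrArg GraphHom.fN (H.lift_fst _ _ w)) ()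
  · exact congrFun (congrArg GraphHom.fN (H.lift_snd _ _ w)) ()

lemma pb_edge {A B X Y : DirGraph} {f : A ⟶ B} {g : A ⟶ X} {h : B ⟶ Y} {k : X ⟶ Y}
    (H : IsPullback f g h k) (b : B.E) (x : X.E) (hbx : h.fE b = k.fE x) :
    ∃ a : A.E, f.fE a = b ∧ g.fE a = x := by
  have w : arHom B b ≫ h = arHom X x ≫ k := by
    apply GraphHom.ext
    · funext bo
      cases bo
      · show h.fN (B.s b) = k.fN (X.s x)
        rw [h.comm_s, k.comm_s, hbx]
      · show h.fN (B.t b) = k.fN (X.t x)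
        rw [h.comm_t, k.comm_t, hbx]
    · funext _; exact hbx
  refine ⟨(H.lift _ _ w).fE (), ?_, ?_⟩
  · exact congrFun (congrArg GraphHom.fE (H.lift_fst _ _ w)) ()
  · exact congrFun (congrArg GraphHom.fE (H.lift_snd _ _ w)) ()

end InvClosureAux

open InvClosureAux in
/-- The invariant closure is a section of retyping: pulling the invariant closure of a
`TG`-typed graph `G` back along the inclusion `in_TG : TG ⟶ TG'` recovers `G`
(expressed as the pullback property of the corresponding square). -/
theorem invariant_closure_retype (ι : Type) (TG TG' : DirGraph)
    (inTG : TG ⟶ TG') (hin : Mono inTG)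
    (border cbody : ι → DirGraph) (cshape : ∀ i, border i ⟶ cbody i)
    (hcshape : ∀ i, Mono (cshape i))
    (tB : ∀ i, border i ⟶ TG) (tCB : ∀ i, cbody i ⟶ TG')
    (hcompl : ∀ i, IsPullback (cshape i) (tB i) (tCB i) inTG)
    (G : DirGraph) (tG : G ⟶ TG)
    (occ : ∀ i, border i ⟶ G) (hocc_mono : ∀ i, Mono (occ i))
    (hocc : ∀ i, occ i ≫ tG = tB i)
    (K : Multicofork (invIndex ι G border cbody cshape occ)) (hK : IsColimit K)
    (u : K.pt ⟶ TG') (hu_none : K.π (none : Option ι) ≫ u = tG ≫ inTG)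
    (hu_some : ∀ i, K.π (some i) ≫ u = tCB i) :
    IsPullback (K.π (none : Option ι)) tG u inTG := by
  classical
  have hinN := mono_fN inTG hin
  have hcsN : ∀ i, Function.Injective (cshape i).fN := fun i => mono_fN _ (hcshape i)
  have hcsE : ∀ i, Function.Injective (cshape i).fE := fun i => mono_fE _ (hcshape i)
  -- The normalization graph `Z`.
  let φN : ∀ i, (cbody i).N → (G.N ⊕ (Σ i, (cbody i).N)) := fun i c =>
    if h : ∃ b, (cshape i).fN b = c then Sum.inl ((occ i).fN h.choose) else Sum.inr ⟨i, c⟩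
  let φE : ∀ i, (cbody i).E → (G.E ⊕ (Σ i, (cbody i).E)) := fun i c =>
    if h : ∃ b, (cshape i).fE b = c then Sum.inl ((occ i).fE h.choose) else Sum.inr ⟨i, c⟩
  have φN_cs : ∀ i b, φN i ((cshape i).fN b) = Sum.inl ((occ i).fN b) := by
    intro i b
    have hex : ∃ b', (cshape i).fN b' = (cshape i).fN b := ⟨b, rfl⟩
    simp only [φN, dif_pos hex]
    rw [hcsN i hex.choose_spec]
  have φE_cs : ∀ i b, φE i ((cshape i).fE b) = Sum.inl ((occ i).fE b) := by
    intro i b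
    have hex : ∃ b', (cshape i).fE b' = (cshape i).fE b := ⟨b, rfl⟩
    simp only [φE, dif_pos hex]
    rw [hcsE i hex.choose_spec]
  let Z : DirGraph :=
    { N := G.N ⊕ (Σ i, (cbody i).N)
      E := G.E ⊕ (Σ i, (cbody i).E)
      s := Sum.elim (fun e => Sum.inl (G.s e)) (fun p => φN p.1 ((cbody p.1).s p.2))
      t := Sum.elim (fun e => Sum.inl (G.t e)) (fun p => φN p.1 ((cbody p.1).t p.2)) }
  let inlHom : G ⟶ Z := ⟨Sum.inl, Sum.inl, fun _ => rfl, fun _ => rfl⟩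
  have φ_comm_s : ∀ i e, φN i ((cbody i).s e) = Z.s (φE i e) := by
    intro i e
    by_cases h : ∃ b, (cshape i).fE b = e
    · obtain ⟨b, rfl⟩ := h
      rw [φE_cs]
      show φN i ((cbody i).s ((cshape i).fE b)) = Sum.inl (G.s ((occ i).fE b))
      rw [← (cshape i).comm_s, φN_cs, ← (occ i).comm_s]
    · simp only [φE, dif_neg h]
      rfl
  have φ_comm_t : ∀ i e, φN i ((cbody i).t e) = Z.t (φE i e) := by
    intro i e
    by_cases h : ∃ b, (cshape i).fE b = e
    · obtain ⟨b, rfl⟩ := h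
      rw [φE_cs]
      show φN i ((cbody i).t ((cshape i).fE b)) = Sum.inl (G.t ((occ i).fE b))
      rw [← (cshape i).comm_t, φN_cs, ← (occ i).comm_t]
    · simp only [φE, dif_neg h]
      rfl
  let φHom : ∀ i, cbody i ⟶ Z := fun i => ⟨φN i, φE i, φ_comm_s i, φ_comm_t i⟩
  -- The folding morphism `θ : Z ⟶ K.pt`.
  have condN : ∀ i b, (K.π (some i)).fN ((cshape i).fN b) = (K.π none).fN ((occ i).fN b) :=
    fun i b => congrFun (congrArg GraphHom.fN (Multicofork.condition K i)) b
  have condE : ∀ i b, (K.π (some i)).fE ((cshape i).fE b) = (K.π none).fE ((occ i).fE b) :=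
    fun i b => congrFun (congrArg GraphHom.fE (Multicofork.condition K i)) b
  let θN : Z.N → K.pt.N := Sum.elim (K.π none).fN (fun p => (K.π (some p.1)).fN p.2)
  let θE : Z.E → K.pt.E := Sum.elim (K.π none).fE (fun p => (K.π (some p.1)).fE p.2)
  have θφN : ∀ i c, θN (φN i c) = (K.π (some i)).fN c := by
    intro i c
    by_cases h : ∃ b, (cshape i).fN b = c
    · obtain ⟨b, rfl⟩ := h
      rw [φN_cs]
      show (K.π none).fN ((occ i).fN b) = _
      rw [condN]
    · simp only [φN, dif_neg h]
      rfl
  have θφE : ∀ i c, θE (φE i c) = (K.π (some i)).fE c := by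
    intro i c
    by_cases h : ∃ b, (cshape i).fE b = c
    · obtain ⟨b, rfl⟩ := h
      rw [φE_cs]
      show (K.π none).fE ((occ i).fE b) = _
      rw [condE]
    · simp only [φE, dif_neg h]
      rfl
  let θ : Z ⟶ K.pt := by
    refine ⟨θN, θE, ?_, ?_⟩
    · rintro (e | ⟨i, e⟩)
      · exact (K.π none).comm_s e
      · show θN (φN i ((cbody i).s e)) = K.pt.s (θE (Sum.inr ⟨i, e⟩))
        rw [θφN]
        exact (K.π (some i)).comm_s e
    · rintro (e | ⟨i, e⟩)
      · exact (K.π none).comm_t e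
      · show θN (φN i ((cbody i).t e)) = K.pt.t (θE (Sum.inr ⟨i, e⟩))
        rw [θφN]
        exact (K.π (some i)).comm_t e
  -- The multicofork over `Z` and the induced map `ψ`.
  let Zfork : Multicofork (invIndex ι G border cbody cshape occ) :=
    Multicofork.ofπ _ Z (fun r => Option.rec inlHom φHom r) (by
      intro i
      apply GraphHom.ext
      · funext b; exact φN_cs i b
      · funext b; exact φE_cs i b)
  let ψ : K.pt ⟶ Z := hK.desc Zfork
  have hψ : ∀ r : Option ι, K.π r ≫ ψ = Zfork.π r := fun r =>
    hK.fac Zfork (CategoryTheory.Limits.WalkingMultispan.right r)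
  have hext : ∀ {W : DirGraph} (f g : K.pt ⟶ W),
      (∀ r : Option ι, K.π r ≫ f = K.π r ≫ g) → f = g := by
    intro W f g h
    apply hK.hom_ext
    rintro (a | r)
    · rw [K.fst_app_right]
      dsimp only
      exact (Category.assoc _ _ _).trans ((congrArg (_ ≫ ·) (h (some a))).trans (Category.assoc _ _ _).symm)
    · exact h r
  have hψθ : ψ ≫ θ = 𝟙 K.pt := by
    apply hext
    rintro (_ | i)
    · rw [← Category.assoc, hψ, Category.comp_id]
      apply GraphHom.ext
      · funext c; rfl
      · funext c; rfl
    · rw [← Category.assoc, hψ, Category.comp_id]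
      apply GraphHom.ext
      · funext c; exact θφN i c
      · funext c; exact θφE i c
  -- Joint surjectivity of the cocone maps.
  have surjN : ∀ w : K.pt.N,
      (∃ y, (K.π (none : Option ι)).fN y = w) ∨ ∃ i c, (K.π (some i)).fN c = w := by
    intro w
    have hw : θN (ψ.fN w) = w := congrFun (congrArg GraphHom.fN hψθ) w
    rcases hz : ψ.fN w with y | p
    · exact Or.inl ⟨y, by rw [← hw, hz]; rfl⟩
    · exact Or.inr ⟨p.1, p.2, by rw [← hw, hz]; rfl⟩
  have surjE : ∀ w : K.pt.E,
      (∃ y, (K.π (none : Option ι)).fE y = w) ∨ ∃ i c, (K.π (some i)).fE c = w := by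
    intro w
    have hw : θE (ψ.fE w) = w := congrFun (congrArg GraphHom.fE hψθ) w
    rcases hz : ψ.fE w with y | p
    · exact Or.inl ⟨y, by rw [← hw, hz]; rfl⟩
    · exact Or.inr ⟨p.1, p.2, by rw [← hw, hz]; rfl⟩
  -- Injectivity of the components of `K.π none`.
  have hψ_none := hψ none
  have injN : Function.Injective (K.π (none : Option ι)).fN := by
    intro y y' h
    have h1 : ψ.fN ((K.π (none : Option ι)).fN y) = Sum.inl y :=
      congrFun (congrArg GraphHom.fN hψ_none) y
    have h2 : ψ.fN ((K.π (none : Option ι)).fN y') = Sum.inl y' :=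
      congrFun (congrArg GraphHom.fN hψ_none) y'
    rw [h] at h1
    rw [h1] at h2
    exact (Sum.inl.injEq _ _).mp h2
  have injE : Function.Injective (K.π (none : Option ι)).fE := by
    intro y y' h
    have h1 : ψ.fE ((K.π (none : Option ι)).fE y) = Sum.inl y :=
      congrFun (congrArg GraphHom.fE hψ_none) y
    have h2 : ψ.fE ((K.π (none : Option ι)).fE y') = Sum.inl y' :=
      congrFun (congrArg GraphHom.fE hψ_none) y'
    rw [h] at h1
    rw [h1] at h2
    exact (Sum.inl.injEq _ _).mp h2
  -- Pointwise versions of the typing compatibilities.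
  have hu_noneN : ∀ y, u.fN ((K.π (none : Option ι)).fN y) = inTG.fN (tG.fN y) :=
    fun y => congrFun (congrArg GraphHom.fN hu_none) y
  have hu_noneE : ∀ y, u.fE ((K.π (none : Option ι)).fE y) = inTG.fE (tG.fE y) :=
    fun y => congrFun (congrArg GraphHom.fE hu_none) y
  have hu_someN : ∀ i c, u.fN ((K.π (some i)).fN c) = (tCB i).fN c :=
    fun i c => congrFun (congrArg GraphHom.fN (hu_some i)) c
  have hu_someE : ∀ i c, u.fE ((K.π (some i)).fE c) = (tCB i).fE c :=
    fun i c => congrFun (congrArg GraphHom.fE (hu_some i)) c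
  -- Existence of lifts for pullback cones.
  have liftexN : ∀ {X : DirGraph} (f : X ⟶ K.pt) (g : X ⟶ TG), f ≫ u = g ≫ inTG →
      ∀ x, ∃ y, (K.π (none : Option ι)).fN y = f.fN x := by
    intro X f g hfg x
    rcases surjN (f.fN x) with ⟨y, hy⟩ | ⟨i, c, hc⟩
    · exact ⟨y, hy⟩
    · have h1 : (tCB i).fN c = inTG.fN (g.fN x) := by
        rw [← hu_someN i c, hc]
        exact congrFun (congrArg GraphHom.fN hfg) x
      obtain ⟨b, hb1, -⟩ := pb_node (hcompl i) c (g.fN x) h1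
      exact ⟨(occ i).fN b, by rw [← condN, hb1, hc]⟩
  have liftexE : ∀ {X : DirGraph} (f : X ⟶ K.pt) (g : X ⟶ TG), f ≫ u = g ≫ inTG →
      ∀ x, ∃ y, (K.π (none : Option ι)).fE y = f.fE x := by
    intro X f g hfg x
    rcases surjE (f.fE x) with ⟨y, hy⟩ | ⟨i, c, hc⟩
    · exact ⟨y, hy⟩
    · have h1 : (tCB i).fE c = inTG.fE (g.fE x) := by
        rw [← hu_someE i c, hc]
        exact congrFun (congrArg GraphHom.fE hfg) x
      obtain ⟨b, hb1, -⟩ := pb_edge (hcompl i) c (g.fE x) h1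
      exact ⟨(occ i).fE b, by rw [← condE, hb1, hc]⟩
  have πcomm_s : ∀ e, (K.π (none : Option ι)).fN (G.s e) = K.pt.s ((K.π none).fE e) :=
    (K.π (none : Option ι)).comm_s
  have πcomm_t : ∀ e, (K.π (none : Option ι)).fN (G.t e) = K.pt.t ((K.π none).fE e) :=
    (K.π (none : Option ι)).comm_t
  -- The lift.
  let L : ∀ s : PullbackCone u inTG, s.pt ⟶ G := fun s =>
    { fN := fun x => (liftexN s.fst s.snd s.condition x).choose
      fE := fun e => (liftexE s.fst s.snd s.condition e).choose
      comm_s := by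
        intro e
        apply injN
        rw [(liftexN s.fst s.snd s.condition _).choose_spec, πcomm_s (liftexE s.fst s.snd s.condition e).choose,
          (liftexE s.fst s.snd s.condition _).choose_spec, ← s.fst.comm_s]
      comm_t := by
        intro e
        apply injN
        rw [(liftexN s.fst s.snd s.condition _).choose_spec, πcomm_t (liftexE s.fst s.snd s.condition e).choose,
          (liftexE s.fst s.snd s.condition _).choose_spec, ← s.fst.comm_t] }
  have L_facN : ∀ (s : PullbackCone u inTG) x,
      (K.π (none : Option ι)).fN ((L s).fN x) = s.fst.fN x :=
    fun s x => (liftexN s.fst s.snd s.condition x).choose_spec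
  have L_facE : ∀ (s : PullbackCone u inTG) e,
      (K.π (none : Option ι)).fE ((L s).fE e) = s.fst.fE e :=
    fun s e => (liftexE s.fst s.snd s.condition e).choose_spec
  -- Assemble the pullback.
  apply IsPullback.of_isLimit (c := PullbackCone.mk _ _ hu_none)
  apply PullbackCone.IsLimit.mk hu_none L ?_ ?_ ?_
  · -- fac_left
    intro s
    apply GraphHom.ext
    · funext x
      exact L_facN s x
    · funext e
      exact L_facE s e
  · -- fac_right
    intro s
    have hcondN : ∀ x, u.fN (s.fst.fN x) = inTG.fN (s.snd.fN x) :=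
      fun x => congrFun (congrArg GraphHom.fN s.condition) x
    have hcondE : ∀ x, u.fE (s.fst.fE x) = inTG.fE (s.snd.fE x) :=
      fun x => congrFun (congrArg GraphHom.fE s.condition) x
    apply GraphHom.ext
    · funext x
      apply hinN
      show inTG.fN (tG.fN _) = _
      rw [← hu_noneN, L_facN s x, hcondN]
    · funext e
      apply mono_fE inTG hin
      show inTG.fE (tG.fE _) = _
      rw [← hu_noneE, L_facE s e, hcondE]
  · -- uniqueness
    intro s m hm₁ _
    have hmN : ∀ x, (K.π (none : Option ι)).fN (m.fN x) = s.fst.fN x :=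
      fun x => congrFun (congrArg GraphHom.fN hm₁) x
    have hmE : ∀ x, (K.π (none : Option ι)).fE (m.fE x) = s.fst.fE x :=
      fun x => congrFun (congrArg GraphHom.fE hm₁) x
    apply GraphHom.ext
    · funext x
      apply injN
      rw [hmN, L_facN s x]
    · funext e
      apply injE
      rw [hmE, L_facE s e]
end

section
/- An incremental constraint between finite graphs whose negative part is a single edge between existing nodes admits exactly the factorization structure claimed: if n : L → N is a mono of graphs such that N is obtained from n(L) by adding a single edge e whose endpoints are in n(L), then n is incremental. -/
open CategoryTheory CategoryTheory.Limits

/-- A mono `n : L ⟶ N` is incremental if any two mono factorizations of it are comparable. -/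
def Incremental {L N : DirGraph} (n : L ⟶ N) : Prop :=
  Mono n ∧ ∀ {X₁ X₂ : DirGraph} (a₁ : L ⟶ X₁) (b₁ : X₁ ⟶ N) (a₂ : L ⟶ X₂) (b₂ : X₂ ⟶ N),
    Mono a₁ → Mono b₁ → Mono a₂ → Mono b₂ → a₁ ≫ b₁ = n → a₂ ≫ b₂ = n →
    (∃ x : X₁ ⟶ X₂, a₁ ≫ x = a₂ ∧ x ≫ b₂ = b₁) ∨
    (∃ x : X₂ ⟶ X₁, a₂ ≫ x = a₁ ∧ x ≫ b₁ = b₂)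

lemma comp_fN {G H K : DirGraph} (f : G ⟶ H) (g : H ⟶ K) :
    (f ≫ g).fN = g.fN ∘ f.fN := rfl

lemma comp_fE {G H K : DirGraph} (f : G ⟶ H) (g : H ⟶ K) :
    (f ≫ g).fE = g.fE ∘ f.fE := rfl

lemma mono_fN_inj {G H : DirGraph} (f : G ⟶ H) (hf : Mono f) :
    Function.Injective f.fN := by
  intro x y hxy
  let P : DirGraph := ⟨PUnit, Empty, Empty.elim, Empty.elim⟩
  let g : P ⟶ G := ⟨fun _ => x, Empty.elim, fun e => e.elim, fun e => e.elim⟩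
  let h : P ⟶ G := ⟨fun _ => y, Empty.elim, fun e => e.elim, fun e => e.elim⟩
  have : g ≫ f = h ≫ f := by
    apply GraphHom.ext
    · funext _; exact hxy
    · funext e; exact e.elim
  have := (cancel_mono f).mp this
  exact congrFun (congrArg GraphHom.fN this) PUnit.unit

lemma mono_fE_inj {G H : DirGraph} (f : G ⟶ H) (hf : Mono f) :
    Function.Injective f.fE := by
  intro x y hxy
  let P : DirGraph := ⟨Bool, PUnit, fun _ => false, fun _ => true⟩
  let g : P ⟶ G := ⟨fun b => if b then G.t x else G.s x, fun _ => x,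
    fun _ => rfl, fun _ => rfl⟩
  let h : P ⟶ G := ⟨fun b => if b then G.t y else G.s y, fun _ => y,
    fun _ => rfl, fun _ => rfl⟩
  have : g ≫ f = h ≫ f := by
    apply GraphHom.ext
    · funext b
      cases b
      · show f.fN (G.s x) = f.fN (G.s y)
        rw [f.comm_s, f.comm_s, hxy]
      · show f.fN (G.t x) = f.fN (G.t y)
        rw [f.comm_t, f.comm_t, hxy]
    · funext _; exact hxy
  have := (cancel_mono f).mp this
  exact congrFun (congrArg GraphHom.fE this) PUnit.unit

/-- A constraint whose negative part is a single edge between existing nodes is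
incremental: if `N` is obtained from the image of `L` by adding one edge `e` whose
endpoints lie in the image, then the mono `n` is incremental. -/
theorem incremental_of_single_edge {L N : DirGraph} (n : L ⟶ N) (hmono : Mono n)
    (hN_nodes : Function.Bijective (GraphHom.fN n))
    (e : N.E) (he : e ∉ Set.range (GraphHom.fE n))
    (hE : ∀ e' : N.E, e' ∈ Set.range (GraphHom.fE n) ∨ e' = e) :
    Incremental n := by
  classical
  refine ⟨hmono, ?_⟩
  intro X₁ X₂ a₁ b₁ a₂ b₂ ma₁ mb₁ ma₂ mb₂ h₁ h₂
  have ha1E := mono_fE_inj a₁ ma₁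
  have hb1N := mono_fN_inj b₁ mb₁
  have hb1E := mono_fE_inj b₁ mb₁
  have ha2N := mono_fN_inj a₂ ma₂
  have ha2E := mono_fE_inj a₂ ma₂
  have hb2N := mono_fN_inj b₂ mb₂
  have hb2E := mono_fE_inj b₂ mb₂
  have f1N : ∀ l, b₁.fN (a₁.fN l) = n.fN l := fun l =>
    congrFun (congrArg GraphHom.fN h₁) l
  have f1E : ∀ l, b₁.fE (a₁.fE l) = n.fE l := fun l =>
    congrFun (congrArg GraphHom.fE h₁) l
  have f2N : ∀ l, b₂.fN (a₂.fN l) = n.fN l := fun l =>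
    congrFun (congrArg GraphHom.fN h₂) l
  have f2E : ∀ l, b₂.fE (a₂.fE l) = n.fE l := fun l =>
    congrFun (congrArg GraphHom.fE h₂) l
  -- a₁.fN is bijective
  have ha1Nsurj : Function.Surjective a₁.fN := by
    intro x
    obtain ⟨l, hl⟩ := hN_nodes.2 (b₁.fN x)
    exact ⟨l, hb1N (by rw [f1N, hl])⟩
  have ha1Nbij : Function.Bijective a₁.fN := ⟨mono_fN_inj a₁ ma₁, ha1Nsurj⟩
  have ha2Nsurj : Function.Surjective a₂.fN := by
    intro x
    obtain ⟨l, hl⟩ := hN_nodes.2 (b₂.fN x)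
    exact ⟨l, hb2N (by rw [f2N, hl])⟩
  -- classification of edges of X₁
  have edge1 : ∀ k : X₁.E, (∃ l, a₁.fE l = k) ∨ b₁.fE k = e := by
    intro k
    rcases hE (b₁.fE k) with ⟨l, hl⟩ | hl
    · exact Or.inl ⟨l, hb1E (by rw [f1E, hl])⟩
    · exact Or.inr hl
  by_cases hcase : e ∈ Set.range b₂.fE
  · -- build x : X₁ ⟶ X₂
    obtain ⟨k₂, hk₂⟩ := hcase
    left
    let eN₁ := Equiv.ofBijective a₁.fN ha1Nbij
    have eN₁symm : ∀ l, eN₁.symm (a₁.fN l) = l := fun l => Equiv.ofBijective_symm_apply_apply _ _ l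
    -- key node compatibility
    have nodecomp : ∀ v : X₁.N, b₂.fN (a₂.fN (eN₁.symm v)) = b₁.fN v := by
      intro v
      rw [f2N, ← f1N]
      show b₁.fN (a₁.fN (eN₁.symm v)) = b₁.fN v
      congr 1
      exact eN₁.apply_symm_apply v
    let xE : X₁.E → X₂.E := fun k =>
      if h : ∃ l, a₁.fE l = k then a₂.fE h.choose else k₂
    have xE_spec : ∀ k, b₂.fE (xE k) = b₁.fE k := by
      intro k
      by_cases h : ∃ l, a₁.fE l = k
      · simp only [xE, dif_pos h]
        rw [f2E, ← f1E]
        exact congrArg b₁.fE h.choose_spec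
      · simp only [xE, dif_neg h]
        rcases edge1 k with h' | h'
        · exact absurd h' h
        · rw [hk₂, h']
    refine ⟨⟨fun v => a₂.fN (eN₁.symm v), xE, ?_, ?_⟩, ?_, ?_⟩
    · intro k
      apply hb2N
      show b₂.fN (a₂.fN (eN₁.symm (X₁.s k))) = b₂.fN (X₂.s (xE k))
      rw [nodecomp, b₁.comm_s, b₂.comm_s, xE_spec]
    · intro k
      apply hb2N
      show b₂.fN (a₂.fN (eN₁.symm (X₁.t k))) = b₂.fN (X₂.t (xE k))
      rw [nodecomp, b₁.comm_t, b₂.comm_t, xE_spec]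
    · apply GraphHom.ext
      · funext l
        show a₂.fN (eN₁.symm (a₁.fN l)) = a₂.fN l
        rw [eN₁symm]
      · funext l
        show xE (a₁.fE l) = a₂.fE l
        have h : ∃ l', a₁.fE l' = a₁.fE l := ⟨l, rfl⟩
        simp only [xE, dif_pos h]
        congr 1
        exact ha1E h.choose_spec
    · apply GraphHom.ext
      · funext v
        exact nodecomp v
      · funext k
        exact xE_spec k
  · -- a₂ is edge-surjective, build x : X₂ ⟶ X₁
    right
    have ha2Esurj : Function.Surjective a₂.fE := by
      intro k
      rcases hE (b₂.fE k) with ⟨l, hl⟩ | hl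
      · exact ⟨l, hb2E (by rw [f2E, hl])⟩
      · exact absurd ⟨k, hl⟩ hcase
    let eN₂ := Equiv.ofBijective a₂.fN ⟨ha2N, ha2Nsurj⟩
    let eE₂ := Equiv.ofBijective a₂.fE ⟨ha2E, ha2Esurj⟩
    have heN : ∀ v, a₂.fN (eN₂.symm v) = v := fun v => eN₂.apply_symm_apply v
    have heE : ∀ k, a₂.fE (eE₂.symm k) = k := fun k => eE₂.apply_symm_apply k
    refine ⟨⟨fun v => a₁.fN (eN₂.symm v), fun k => a₁.fE (eE₂.symm k), ?_, ?_⟩, ?_, ?_⟩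
    · intro k
      show a₁.fN (eN₂.symm (X₂.s k)) = X₁.s (a₁.fE (eE₂.symm k))
      rw [← a₁.comm_s]
      congr 1
      apply ha2N
      rw [heN, a₂.comm_s, heE]
    · intro k
      show a₁.fN (eN₂.symm (X₂.t k)) = X₁.t (a₁.fE (eE₂.symm k))
      rw [← a₁.comm_t]
      congr 1
      apply ha2N
      rw [heN, a₂.comm_t, heE]
    · apply GraphHom.ext
      · funext l
        show a₁.fN (eN₂.symm (a₂.fN l)) = a₁.fN l
        exact congrArg a₁.fN (eN₂.symm_apply_apply l)
      · funext l
        show a₁.fE (eE₂.symm (a₂.fE l)) = a₁.fE l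
        exact congrArg a₁.fE (eE₂.symm_apply_apply l)
    · apply GraphHom.ext
      · funext v
        show b₁.fN (a₁.fN (eN₂.symm v)) = b₂.fN v
        rw [f1N, ← f2N, heN]
      · funext k
        show b₁.fE (a₁.fE (eE₂.symm k)) = b₂.fE k
        rw [f1E, ← f2E, heE]
end
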